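/- For any symmetric rank-structured tensor, ‖sym(w^{⊗(k−2j)} ⊗ (P_w^⊥)^{⊗j})‖_F² = (1/binom(k,2j)) · ‖sym((P_w^⊥)^{⊗j})‖_F², where w ∈ S^{d−1} and P_w^⊥ = I − ww^T. -/

import Mathlib

open Finset

noncomputable def symTensor {d k : ℕ} (T : (Fin k → Fin d) → ℝ) : (Fin k → Fin d) → ℝ :=
  fun i => (1 / (Nat.factorial k : ℝ)) * ∑ π : Equiv.Perm (Fin k), T (i ∘ π)

def tget {d k : ℕ} [NeZero d] (i : Fin k → Fin d) (a : ℕ) : Fin d :=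
  if h : a < k then i ⟨a, h⟩ else 0

def mixedTensor {d : ℕ} [NeZero d] (w : Fin d → ℝ) (P : Fin d → Fin d → ℝ) (k j : ℕ) :
    (Fin k → Fin d) → ℝ :=
  fun i => (∏ a ∈ Finset.range (k - 2 * j), w (tget i a)) *
    ∏ b ∈ Finset.range j, P (tget i (k - 2 * j + 2 * b)) (tget i (k - 2 * j + 2 * b + 1))

noncomputable def Pw {d : ℕ} (w : Fin d → ℝ) : Fin d → Fin d → ℝ :=
  fun a b => (if a = b then (1:ℝ) else 0) - w a * w b

open Equiv

section AuxLemmas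
set_option linter.unusedSectionVars false
variable {d k j m : ℕ} [NeZero d]

lemma sum_kill (w : Fin d → ℝ) (c c₂ : Fin k) (hne : c₂ ≠ c)
    (Q : Fin d → Fin d → ℝ) (hQ : ∀ y, ∑ x, w x * Q x y = 0)
    (g : (Fin k → Fin d) → ℝ) (hg : ∀ i x, g (Function.update i c x) = g i)
    (f : (Fin k → Fin d) → ℝ)
    (hf : ∀ i, f i = w (i c) * Q (i c) (i c₂) * g i) :
    ∑ i : Fin k → Fin d, f i = 0 := by
  have h1 : ∀ i : Fin k → Fin d, ∑ x : Fin d, f (Function.update i c x) = 0 := by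
    intro i
    have h2 : ∀ x : Fin d, f (Function.update i c x) = w x * Q x (i c₂) * g i := by
      intro x
      rw [hf, Function.update_self, Function.update_of_ne hne, hg]
    simp only [h2]
    rw [← Finset.sum_mul, hQ, zero_mul]
  have key : ∀ (x : Fin d) (r : {a : Fin k // a ≠ c} → Fin d),
      (Equiv.funSplitAt c (Fin d)).symm (x, r)
        = Function.update ((Equiv.funSplitAt c (Fin d)).symm (0, r)) c x := by
    intro x r
    funext a
    by_cases h : a = c
    · subst h
      rw [Function.update_self]
      exact dif_pos rfl
    · rw [Function.update_of_ne h]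
      show (if ha : a = c then _ else r ⟨a, ha⟩) = (if ha : a = c then _ else r ⟨a, ha⟩)
      rw [dif_neg h, dif_neg h]
  calc ∑ i : Fin k → Fin d, f i
      = ∑ p : Fin d × ({a : Fin k // a ≠ c} → Fin d), f ((Equiv.funSplitAt c (Fin d)).symm p) :=
        (Equiv.sum_comp (Equiv.funSplitAt c (Fin d)).symm f).symm
    _ = ∑ x : Fin d, ∑ r : {a : Fin k // a ≠ c} → Fin d,
          f ((Equiv.funSplitAt c (Fin d)).symm (x, r)) := Fintype.sum_prod_type _
    _ = ∑ r : {a : Fin k // a ≠ c} → Fin d, ∑ x : Fin d,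
          f ((Equiv.funSplitAt c (Fin d)).symm (x, r)) := Finset.sum_comm
    _ = 0 := by
        apply Finset.sum_eq_zero
        intro r _
        calc ∑ x : Fin d, f ((Equiv.funSplitAt c (Fin d)).symm (x, r))
            = ∑ x : Fin d, f (Function.update ((Equiv.funSplitAt c (Fin d)).symm (0, r)) c x) :=
              Finset.sum_congr rfl fun x _ => congrArg f (key x r)
          _ = 0 := h1 _

lemma sym_sq (T : (Fin k → Fin d) → ℝ) :
    ∑ i : Fin k → Fin d, (symTensor T i) ^ 2
      = (1 / (Nat.factorial k : ℝ)) *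
          ∑ τ : Equiv.Perm (Fin k), ∑ i : Fin k → Fin d, T i * T (i ∘ τ) := by
  have step1 : ∀ (π σ : Equiv.Perm (Fin k)),
      ∑ i : Fin k → Fin d, T (i ∘ π) * T (i ∘ σ)
        = ∑ i : Fin k → Fin d, T i * T (i ∘ ⇑(π⁻¹ * σ)) := by
    intro π σ
    rw [← Equiv.sum_comp (Equiv.arrowCongr π.symm (Equiv.refl (Fin d)))
      (fun i : Fin k → Fin d => T i * T (i ∘ ⇑(π⁻¹ * σ)))]
    apply Finset.sum_congr rfl
    intro i _
    have e1 : (Equiv.arrowCongr π.symm (Equiv.refl (Fin d))) i = i ∘ ⇑π := by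
      funext x; simp [Equiv.arrowCongr]
    rw [e1]
    have e2 : (i ∘ ⇑π) ∘ ⇑(π⁻¹ * σ) = i ∘ ⇑σ := by
      funext x
      simp [Equiv.Perm.mul_apply]
    rw [e2]
  have step2 : ∀ π : Equiv.Perm (Fin k),
      ∑ σ : Equiv.Perm (Fin k), ∑ i : Fin k → Fin d, T i * T (i ∘ ⇑(π⁻¹ * σ))
        = ∑ σ : Equiv.Perm (Fin k), ∑ i : Fin k → Fin d, T i * T (i ∘ ⇑σ) := by
    intro π
    rw [← Equiv.sum_comp (Equiv.mulLeft π⁻¹)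
      (fun σ : Equiv.Perm (Fin k) => ∑ i : Fin k → Fin d, T i * T (i ∘ ⇑σ))]
    simp [Equiv.coe_mulLeft]
  have expand : ∑ i : Fin k → Fin d, (symTensor T i) ^ 2
      = (1 / (Nat.factorial k : ℝ))^2 * ∑ π : Equiv.Perm (Fin k), ∑ σ : Equiv.Perm (Fin k),
          ∑ i : Fin k → Fin d, T (i ∘ π) * T (i ∘ σ) := by
    unfold symTensor
    have h : ∀ i : Fin k → Fin d,
        ((1 / (Nat.factorial k : ℝ)) * ∑ π : Equiv.Perm (Fin k), T (i ∘ π)) ^ 2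
          = (1 / (Nat.factorial k : ℝ))^2 * ∑ π : Equiv.Perm (Fin k),
              ∑ σ : Equiv.Perm (Fin k), T (i ∘ π) * T (i ∘ σ) := by
      intro i
      rw [mul_pow, sq (∑ π : Equiv.Perm (Fin k), T (i ∘ π)), Finset.sum_mul_sum]
    simp only [h]
    rw [← Finset.mul_sum]
    congr 1
    rw [Finset.sum_comm]
    apply Finset.sum_congr rfl
    intro π _
    rw [Finset.sum_comm]
  rw [expand]
  have : ∀ π : Equiv.Perm (Fin k),
      ∑ σ : Equiv.Perm (Fin k), ∑ i : Fin k → Fin d, T (i ∘ π) * T (i ∘ σ)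
        = ∑ σ : Equiv.Perm (Fin k), ∑ i : Fin k → Fin d, T i * T (i ∘ ⇑σ) := by
    intro π
    rw [← step2 π]
    exact Finset.sum_congr rfl fun σ _ => step1 π σ
  simp only [this]
  rw [Finset.sum_const, card_univ, Fintype.card_perm, Fintype.card_fin, nsmul_eq_mul]
  have hk : (Nat.factorial k : ℝ) ≠ 0 := by exact_mod_cast (Nat.factorial_pos k).ne'
  field_simp
lemma tget_lt (i : Fin k → Fin d) (a : ℕ) (h : a < k) : tget i a = i ⟨a, h⟩ := dif_pos h

lemma sum_w_P (w : Fin d → ℝ) (hw : ∑ x, w x ^ 2 = 1) (y : Fin d) :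
    ∑ x, w x * ((if x = y then (1:ℝ) else 0) - w x * w y) = 0 := by
  have : ∀ x : Fin d, w x * ((if x = y then (1:ℝ) else 0) - w x * w y)
      = (if x = y then w x else 0) - w x ^ 2 * w y := by
    intro x; by_cases h : x = y <;> simp [h] <;> ring
  simp only [this]
  rw [Finset.sum_sub_distrib, Finset.sum_ite_eq' univ y w, ← Finset.sum_mul, hw]
  simp

lemma sum_w_P' (w : Fin d → ℝ) (hw : ∑ x, w x ^ 2 = 1) (y : Fin d) :
    ∑ x, w x * ((if y = x then (1:ℝ) else 0) - w y * w x) = 0 := by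
  have : ∀ x : Fin d, w x * ((if y = x then (1:ℝ) else 0) - w y * w x)
      = w x * ((if x = y then (1:ℝ) else 0) - w x * w y) := by
    intro x
    by_cases h : x = y
    · subst h; rfl
    · rw [if_neg h, if_neg (Ne.symm h)]; ring
  simp only [this]
  exact sum_w_P w hw y

variable (hm : m + 2 * j = k)

def eFin (hm : m + 2 * j = k) : (Fin m ⊕ Fin (2 * j)) ≃ Fin k :=
  finSumFinEquiv.trans (finCongr hm)

lemma eFin_inl (a : Fin m) : ((eFin hm) (Sum.inl a) : ℕ) = a.val := by
  simp [eFin]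

lemma eFin_inr (b : Fin (2 * j)) : ((eFin hm) (Sum.inr b) : ℕ) = m + b.val := by
  simp [eFin]

lemma eFin_symm_lt (a : Fin k) (h : a.val < m) :
    (eFin hm).symm a = Sum.inl ⟨a.val, h⟩ := by
  rw [Equiv.symm_apply_eq]
  apply Fin.ext
  simp [eFin]

lemma eFin_symm_ge (a : Fin k) (h : m ≤ a.val) :
    (eFin hm).symm a = Sum.inr ⟨a.val - m, by omega⟩ := by
  rw [Equiv.symm_apply_eq]
  apply Fin.ext
  have := a.isLt
  simp [eFin]
  omega

def embed (hm : m + 2 * j = k) (p : Equiv.Perm (Fin m) × Equiv.Perm (Fin (2 * j))) :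
    Equiv.Perm (Fin k) :=
  (Equiv.permCongr (eFin hm)) ((Equiv.Perm.sumCongrHom _ _) p)

lemma embed_injective : Function.Injective (embed hm) :=
  (Equiv.permCongr (eFin hm)).injective.comp (Equiv.Perm.sumCongrHom_injective)

lemma embed_apply_lt (p : Equiv.Perm (Fin m) × Equiv.Perm (Fin (2 * j)))
    (a : Fin k) (h : a.val < m) :
    ((embed hm p) a : ℕ) = (p.1 ⟨a.val, h⟩ : ℕ) := by
  rw [embed]
  simp only [Equiv.permCongr_apply]
  rw [eFin_symm_lt hm a h]
  simp [Equiv.Perm.sumCongrHom, eFin]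

lemma embed_apply_ge (p : Equiv.Perm (Fin m) × Equiv.Perm (Fin (2 * j)))
    (a : Fin k) (h : m ≤ a.val) :
    ((embed hm p) a : ℕ) = m + (p.2 ⟨a.val - m, by omega⟩ : ℕ) := by
  rw [embed]
  simp only [Equiv.permCongr_apply]
  rw [eFin_symm_ge hm a h]
  simp [Equiv.Perm.sumCongrHom, eFin]

lemma embed_pres (p : Equiv.Perm (Fin m) × Equiv.Perm (Fin (2 * j)))
    (a : Fin k) (h : a.val < m) : ((embed hm p) a : ℕ) < m := by
  rw [embed_apply_lt hm p a h]
  exact (p.1 _).isLt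

lemma pres_mem_range (τ : Equiv.Perm (Fin k))
    (hτ : ∀ a : Fin k, a.val < m → (τ a).val < m) :
    ∃ p, embed hm p = τ := by
  set σ : Equiv.Perm (Fin m ⊕ Fin (2 * j)) := (Equiv.permCongr (eFin hm)).symm τ with hσ
  have hmaps : Set.MapsTo σ (Set.range Sum.inl) (Set.range Sum.inl) := by
    rintro x ⟨a, rfl⟩
    have h1 : σ (Sum.inl a) = (eFin hm).symm (τ ((eFin hm) (Sum.inl a))) := by
      simp [hσ, Equiv.permCongr]
    have h2 : ((τ ((eFin hm) (Sum.inl a))) : ℕ) < m := by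
      apply hτ
      rw [eFin_inl]
      exact a.isLt
    rw [h1, eFin_symm_lt hm _ h2]
    exact ⟨_, rfl⟩
  obtain ⟨p, hp⟩ := Equiv.Perm.mem_sumCongrHom_range_of_perm_mapsTo_inl hmaps
  refine ⟨p, ?_⟩
  rw [embed, hp, hσ]
  exact Equiv.apply_symm_apply _ τ


lemma F_vanish (hj : 2 * j ≤ k) (w : Fin d → ℝ) (hw : ∑ x, w x ^ 2 = 1)
    (τ : Equiv.Perm (Fin k))
    (hτ : ¬ ∀ a : Fin k, a.val < k - 2 * j → (τ a).val < k - 2 * j) :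
    ∑ i : Fin k → Fin d,
      mixedTensor w (Pw w) k j i * mixedTensor w (Pw w) k j (i ∘ ⇑τ) = 0 := by
  -- find the bad position
  have hex : ∃ c : Fin k, c.val < k - 2 * j ∧ k - 2 * j ≤ (τ.symm c).val := by
    by_contra hcon
    push_neg at hcon
    apply hτ
    intro a ha
    have hinj : Function.Injective
        (fun (x : {a : Fin k // a.val < k - 2 * j}) =>
          (⟨τ.symm x.1, hcon x.1 x.2⟩ : {a : Fin k // a.val < k - 2 * j})) := by
      intro x y hxy
      apply Subtype.ext
      exact τ.symm.injective (Subtype.ext_iff.mp hxy)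
    obtain ⟨y, hy⟩ := Finite.injective_iff_surjective.mp hinj ⟨a, ha⟩
    have hya : τ.symm y.1 = a := Subtype.ext_iff.mp hy
    have : τ a = y.1 := by rw [← hya, Equiv.apply_symm_apply]
    rw [this]
    exact y.2
  obtain ⟨c, hc, hbm⟩ := hex
  have hbk : (τ.symm c).val < k := (τ.symm c).isLt
  have hmk : (k - 2 * j) + 2 * j = k := by omega
  -- helpers
  have tau_ne : ∀ (a : ℕ) (ha : a < k), a ≠ (τ.symm c).val → τ ⟨a, ha⟩ ≠ c := by
    intro a ha hne h
    apply hne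
    have h2 : (⟨a, ha⟩ : Fin k) = τ.symm c := by
      rw [Equiv.eq_symm_apply]; exact h
    exact congrArg Fin.val h2
  have upd_tget : ∀ (i : Fin k → Fin d) (x : Fin d) (a : ℕ) (ha : a < k),
      a ≠ c.val → tget (Function.update i c x) a = tget i a := by
    intro i x a ha h
    rw [tget_lt _ _ ha, tget_lt _ _ ha]
    exact Function.update_of_ne (fun he => h (congrArg Fin.val he)) _ _
  have upd_comp : ∀ (i : Fin k → Fin d) (x : Fin d) (a : ℕ) (ha : a < k),
      a ≠ (τ.symm c).val →
      tget (Function.update i c x ∘ ⇑τ) a = tget (i ∘ ⇑τ) a := by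
    intro i x a ha h
    rw [tget_lt _ _ ha, tget_lt _ _ ha]
    exact Function.update_of_ne (tau_ne a ha h) _ _
  have tget_eta : ∀ (i : Fin k → Fin d), tget i c.val = i c := by
    intro i
    rw [tget_lt _ _ c.isLt]
  -- parity split
  rcases Nat.even_or_odd ((τ.symm c).val - (k - 2 * j)) with ⟨r, hr2⟩ | ⟨r, hr2⟩
  · -- even case : (τ.symm c).val = (k - 2*j) + 2*r
    have hbv : (τ.symm c).val = (k - 2 * j) + 2 * r := by omega
    have hr : r < j := by omega
    have hlt1 : (k - 2 * j) + 2 * r < k := by omega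
    have hlt2 : (k - 2 * j) + 2 * r + 1 < k := by omega
    set c₂ : Fin k := τ ⟨(k - 2 * j) + 2 * r + 1, hlt2⟩ with hc₂
    have hne : c₂ ≠ c := by
      intro h
      have h2 : ((k - 2 * j) + 2 * r + 1) = (τ.symm c).val := by
        have h3 : (⟨(k - 2 * j) + 2 * r + 1, hlt2⟩ : Fin k) = τ.symm c := by
          rw [Equiv.eq_symm_apply]; exact h
        exact congrArg Fin.val h3
      omega
    have hceq : τ ⟨(k - 2 * j) + 2 * r, hlt1⟩ = c := by
      have : (⟨(k - 2 * j) + 2 * r, hlt1⟩ : Fin k) = τ.symm c := by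
        apply Fin.ext; simpa using hbv.symm
      rw [this, Equiv.apply_symm_apply]
    apply sum_kill w c c₂ hne (Pw w) (fun y => sum_w_P w hw y)
      (fun i =>
        ((∏ a ∈ (range (k - 2 * j)).erase c.val, w (tget i a)) *
          ∏ b ∈ range j, Pw w (tget i (k - 2 * j + 2 * b)) (tget i (k - 2 * j + 2 * b + 1))) *
        ((∏ a ∈ range (k - 2 * j), w (tget (i ∘ ⇑τ) a)) *
          ∏ b ∈ (range j).erase r,
            Pw w (tget (i ∘ ⇑τ) (k - 2 * j + 2 * b)) (tget (i ∘ ⇑τ) (k - 2 * j + 2 * b + 1))))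
    · -- invariance under update
      intro i x
      congr 1
      · congr 1
        · exact Finset.prod_congr rfl fun a ha => by
            rw [upd_tget i x a (by have := mem_erase.mp ha; have := mem_range.mp this.2; omega)
              (mem_erase.mp ha).1]
        · exact Finset.prod_congr rfl fun b hb => by
            have hbj := mem_range.mp hb
            rw [upd_tget i x _ (by omega) (by omega), upd_tget i x _ (by omega) (by omega)]
      · congr 1
        · exact Finset.prod_congr rfl fun a ha => by
            have haj := mem_range.mp ha
            rw [upd_comp i x a (by omega) (by omega)]
        · exact Finset.prod_congr rfl fun b hb => by
            have hbj := mem_range.mp (mem_erase.mp hb).2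
            have hbr := (mem_erase.mp hb).1
            rw [upd_comp i x _ (by omega) (by omega), upd_comp i x _ (by omega) (by omega)]
    · -- factorization
      intro i
      show ((∏ a ∈ range (k - 2 * j), w (tget i a)) *
          ∏ b ∈ range j, Pw w (tget i (k - 2 * j + 2 * b)) (tget i (k - 2 * j + 2 * b + 1))) *
        ((∏ a ∈ range (k - 2 * j), w (tget (i ∘ ⇑τ) a)) *
          ∏ b ∈ range j,
            Pw w (tget (i ∘ ⇑τ) (k - 2 * j + 2 * b)) (tget (i ∘ ⇑τ) (k - 2 * j + 2 * b + 1))) = _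
      rw [← Finset.mul_prod_erase (range (k - 2 * j)) (fun a => w (tget i a))
        (mem_range.mpr hc)]
      rw [← Finset.mul_prod_erase (range j)
        (fun b => Pw w (tget (i ∘ ⇑τ) (k - 2 * j + 2 * b)) (tget (i ∘ ⇑τ) (k - 2 * j + 2 * b + 1)))
        (mem_range.mpr hr)]
      have e1 : tget (i ∘ ⇑τ) (k - 2 * j + 2 * r) = i c := by
        rw [tget_lt _ _ hlt1]
        show i (τ _) = i c
        rw [hceq]
      have e2 : tget (i ∘ ⇑τ) (k - 2 * j + 2 * r + 1) = i c₂ := by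
        rw [tget_lt _ _ hlt2]; rfl
      rw [tget_eta, e1, e2]
      ring
  · -- odd case : (τ.symm c).val = (k - 2*j) + 2*r + 1
    have hbv : (τ.symm c).val = (k - 2 * j) + 2 * r + 1 := by omega
    have hr : r < j := by omega
    have hlt1 : (k - 2 * j) + 2 * r < k := by omega
    have hlt2 : (k - 2 * j) + 2 * r + 1 < k := by omega
    set c₂ : Fin k := τ ⟨(k - 2 * j) + 2 * r, hlt1⟩ with hc₂
    have hne : c₂ ≠ c := by
      intro h
      have h2 : ((k - 2 * j) + 2 * r) = (τ.symm c).val := by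
        have h3 : (⟨(k - 2 * j) + 2 * r, hlt1⟩ : Fin k) = τ.symm c := by
          rw [Equiv.eq_symm_apply]; exact h
        exact congrArg Fin.val h3
      omega
    have hceq : τ ⟨(k - 2 * j) + 2 * r + 1, hlt2⟩ = c := by
      have : (⟨(k - 2 * j) + 2 * r + 1, hlt2⟩ : Fin k) = τ.symm c := by
        apply Fin.ext; simpa using hbv.symm
      rw [this, Equiv.apply_symm_apply]
    apply sum_kill w c c₂ hne (fun x y => Pw w y x) (fun y => sum_w_P' w hw y)
      (fun i =>
        ((∏ a ∈ (range (k - 2 * j)).erase c.val, w (tget i a)) *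
          ∏ b ∈ range j, Pw w (tget i (k - 2 * j + 2 * b)) (tget i (k - 2 * j + 2 * b + 1))) *
        ((∏ a ∈ range (k - 2 * j), w (tget (i ∘ ⇑τ) a)) *
          ∏ b ∈ (range j).erase r,
            Pw w (tget (i ∘ ⇑τ) (k - 2 * j + 2 * b)) (tget (i ∘ ⇑τ) (k - 2 * j + 2 * b + 1))))
    · intro i x
      congr 1
      · congr 1
        · exact Finset.prod_congr rfl fun a ha => by
            rw [upd_tget i x a (by have := mem_erase.mp ha; have := mem_range.mp this.2; omega)
              (mem_erase.mp ha).1]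
        · exact Finset.prod_congr rfl fun b hb => by
            have hbj := mem_range.mp hb
            rw [upd_tget i x _ (by omega) (by omega), upd_tget i x _ (by omega) (by omega)]
      · congr 1
        · exact Finset.prod_congr rfl fun a ha => by
            have haj := mem_range.mp ha
            rw [upd_comp i x a (by omega) (by omega)]
        · exact Finset.prod_congr rfl fun b hb => by
            have hbj := mem_range.mp (mem_erase.mp hb).2
            have hbr := (mem_erase.mp hb).1
            rw [upd_comp i x _ (by omega) (by omega), upd_comp i x _ (by omega) (by omega)]
    · intro i
      show ((∏ a ∈ range (k - 2 * j), w (tget i a)) *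
          ∏ b ∈ range j, Pw w (tget i (k - 2 * j + 2 * b)) (tget i (k - 2 * j + 2 * b + 1))) *
        ((∏ a ∈ range (k - 2 * j), w (tget (i ∘ ⇑τ) a)) *
          ∏ b ∈ range j,
            Pw w (tget (i ∘ ⇑τ) (k - 2 * j + 2 * b)) (tget (i ∘ ⇑τ) (k - 2 * j + 2 * b + 1))) = _
      rw [← Finset.mul_prod_erase (range (k - 2 * j)) (fun a => w (tget i a))
        (mem_range.mpr hc)]
      rw [← Finset.mul_prod_erase (range j)
        (fun b => Pw w (tget (i ∘ ⇑τ) (k - 2 * j + 2 * b)) (tget (i ∘ ⇑τ) (k - 2 * j + 2 * b + 1)))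
        (mem_range.mpr hr)]
      have e1 : tget (i ∘ ⇑τ) (k - 2 * j + 2 * r + 1) = i c := by
        rw [tget_lt _ _ hlt2]
        show i (τ _) = i c
        rw [hceq]
      have e2 : tget (i ∘ ⇑τ) (k - 2 * j + 2 * r) = i c₂ := by
        rw [tget_lt _ _ hlt1]; rfl
      rw [tget_eta, e1, e2]
      ring

lemma B_val (w : Fin d → ℝ) (v : Fin (2 * j) → Fin d) :
    mixedTensor w (Pw w) (2 * j) j v
      = ∏ b ∈ range j, Pw w (tget v (2 * b)) (tget v (2 * b + 1)) := by
  show (∏ a ∈ range (2 * j - 2 * j), w (tget v a)) * _ = _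
  simp [Nat.sub_self]

lemma F_embed (hj : 2 * j ≤ k) (hm : m + 2 * j = k) (w : Fin d → ℝ)
    (hw : ∑ x, w x ^ 2 = 1)
    (α : Equiv.Perm (Fin m)) (β : Equiv.Perm (Fin (2 * j))) :
    ∑ i : Fin k → Fin d,
        mixedTensor w (Pw w) k j i * mixedTensor w (Pw w) k j (i ∘ ⇑(embed hm (α, β)))
      = ∑ v : Fin (2 * j) → Fin d,
          mixedTensor w (Pw w) (2 * j) j v * mixedTensor w (Pw w) (2 * j) j (v ∘ ⇑β) := by
  have hkm : k - 2 * j = m := by omega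
  set τ := embed hm (α, β) with hτ
  -- the reindexing equivalence
  set eA : ((Fin m → Fin d) × (Fin (2 * j) → Fin d)) ≃ (Fin k → Fin d) :=
    ((Equiv.sumArrowEquivProdArrow (Fin m) (Fin (2 * j)) (Fin d)).symm).trans
      (Equiv.arrowCongr (eFin hm) (Equiv.refl (Fin d))) with heA
  have heval : ∀ (u : Fin m → Fin d) (v : Fin (2 * j) → Fin d) (a : Fin k),
      eA (u, v) a = Sum.elim u v ((eFin hm).symm a) := by
    intro u v a
    simp [heA, Equiv.arrowCongr, Equiv.sumArrowEquivProdArrow]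
  have heval_lt : ∀ (u : Fin m → Fin d) (v : Fin (2 * j) → Fin d) (a : Fin k) (h : a.val < m),
      eA (u, v) a = u ⟨a.val, h⟩ := by
    intro u v a h
    rw [heval, eFin_symm_lt hm a h]
    rfl
  have heval_ge : ∀ (u : Fin m → Fin d) (v : Fin (2 * j) → Fin d) (a : Fin k) (h : m ≤ a.val),
      eA (u, v) a = v ⟨a.val - m, by omega⟩ := by
    intro u v a h
    rw [heval, eFin_symm_ge hm a h]
    rfl
  -- key tget computations
  have tg1 : ∀ u v (a : ℕ), a < m → tget (eA (u, v)) a = tget u a := by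
    intro u v a ha
    rw [tget_lt _ _ (by omega), tget_lt _ _ ha]
    exact heval_lt u v ⟨a, by omega⟩ ha
  have tg2 : ∀ u v (t : ℕ) (ht : t < 2 * j), tget (eA (u, v)) (m + t) = tget v t := by
    intro u v t ht
    rw [tget_lt _ _ (by omega), tget_lt _ _ ht]
    rw [heval_ge u v ⟨m + t, by omega⟩ (by simp)]
    congr 1
    apply Fin.ext
    simp
  have tg3 : ∀ u v (a : ℕ) (ha : a < m), tget (eA (u, v) ∘ ⇑τ) a = tget (u ∘ ⇑α) a := by
    intro u v a ha
    rw [tget_lt _ _ (by omega), tget_lt _ _ ha]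
    show eA (u, v) (τ ⟨a, by omega⟩) = u (α ⟨a, ha⟩)
    have h1 : ((τ ⟨a, by omega⟩ : Fin k) : ℕ) = (α ⟨a, ha⟩ : ℕ) :=
      embed_apply_lt hm (α, β) ⟨a, by omega⟩ ha
    rw [heval_lt u v _ (by rw [h1]; exact (α ⟨a, ha⟩).isLt)]
    congr 1
    apply Fin.ext
    simpa using h1
  have tg4 : ∀ u v (t : ℕ) (ht : t < 2 * j),
      tget (eA (u, v) ∘ ⇑τ) (m + t) = tget (v ∘ ⇑β) t := by
    intro u v t ht
    rw [tget_lt _ _ (by omega), tget_lt _ _ ht]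
    show eA (u, v) (τ ⟨m + t, by omega⟩) = v (β ⟨t, ht⟩)
    have h1 : ((τ ⟨m + t, by omega⟩ : Fin k) : ℕ) = m + (β ⟨t, ht⟩ : ℕ) := by
      have := embed_apply_ge hm (α, β) ⟨m + t, by omega⟩ (by simp)
      simpa using this
    rw [heval_ge u v _ (by omega)]
    congr 1
    apply Fin.ext
    simp [h1]
  -- reindex the sum
  rw [← Equiv.sum_comp eA
    (fun i => mixedTensor w (Pw w) k j i * mixedTensor w (Pw w) k j (i ∘ ⇑τ)),
    Fintype.sum_prod_type]
  -- compute each term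
  have hterm : ∀ (u : Fin m → Fin d) (v : Fin (2 * j) → Fin d),
      mixedTensor w (Pw w) k j (eA (u, v)) * mixedTensor w (Pw w) k j (eA (u, v) ∘ ⇑τ)
        = ((∏ a ∈ range m, w (tget u a)) * (∏ a ∈ range m, w (tget (u ∘ ⇑α) a))) *
          (mixedTensor w (Pw w) (2 * j) j v * mixedTensor w (Pw w) (2 * j) j (v ∘ ⇑β)) := by
    intro u v
    rw [B_val, B_val]
    show ((∏ a ∈ range (k - 2 * j), w (tget (eA (u, v)) a)) *
        ∏ b ∈ range j, Pw w (tget (eA (u, v)) (k - 2 * j + 2 * b))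
          (tget (eA (u, v)) (k - 2 * j + 2 * b + 1))) *
      ((∏ a ∈ range (k - 2 * j), w (tget (eA (u, v) ∘ ⇑τ) a)) *
        ∏ b ∈ range j, Pw w (tget (eA (u, v) ∘ ⇑τ) (k - 2 * j + 2 * b))
          (tget (eA (u, v) ∘ ⇑τ) (k - 2 * j + 2 * b + 1))) = _
    rw [hkm]
    have p1 : ∏ a ∈ range m, w (tget (eA (u, v)) a) = ∏ a ∈ range m, w (tget u a) :=
      Finset.prod_congr rfl fun a ha => by rw [tg1 u v a (mem_range.mp ha)]
    have p2 : ∏ b ∈ range j, Pw w (tget (eA (u, v)) (m + 2 * b)) (tget (eA (u, v)) (m + 2 * b + 1))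
        = ∏ b ∈ range j, Pw w (tget v (2 * b)) (tget v (2 * b + 1)) :=
      Finset.prod_congr rfl fun b hb => by
        have hbj := mem_range.mp hb
        rw [tg2 u v (2 * b) (by omega), show m + 2 * b + 1 = m + (2 * b + 1) by omega,
          tg2 u v (2 * b + 1) (by omega)]
    have p3 : ∏ a ∈ range m, w (tget (eA (u, v) ∘ ⇑τ) a)
        = ∏ a ∈ range m, w (tget (u ∘ ⇑α) a) :=
      Finset.prod_congr rfl fun a ha => by rw [tg3 u v a (mem_range.mp ha)]
    have p4 : ∏ b ∈ range j,
          Pw w (tget (eA (u, v) ∘ ⇑τ) (m + 2 * b)) (tget (eA (u, v) ∘ ⇑τ) (m + 2 * b + 1))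
        = ∏ b ∈ range j, Pw w (tget (v ∘ ⇑β) (2 * b)) (tget (v ∘ ⇑β) (2 * b + 1)) :=
      Finset.prod_congr rfl fun b hb => by
        have hbj := mem_range.mp hb
        rw [tg4 u v (2 * b) (by omega), show m + 2 * b + 1 = m + (2 * b + 1) by omega,
          tg4 u v (2 * b + 1) (by omega)]
    rw [p1, p2, p3, p4]
    ring
  simp only [hterm]
  -- factor the double sum
  have hsplit : ∀ u : Fin m → Fin d,
      ∑ v : Fin (2 * j) → Fin d,
        ((∏ a ∈ range m, w (tget u a)) * (∏ a ∈ range m, w (tget (u ∘ ⇑α) a))) *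
          (mixedTensor w (Pw w) (2 * j) j v * mixedTensor w (Pw w) (2 * j) j (v ∘ ⇑β))
        = ((∏ a ∈ range m, w (tget u a)) * (∏ a ∈ range m, w (tget (u ∘ ⇑α) a))) *
          ∑ v : Fin (2 * j) → Fin d,
            mixedTensor w (Pw w) (2 * j) j v * mixedTensor w (Pw w) (2 * j) j (v ∘ ⇑β) :=
    fun u => (Finset.mul_sum _ _ _).symm
  simp only [hsplit]
  rw [← Finset.sum_mul]
  -- the w-part sums to 1
  have hwpart : ∑ u : Fin m → Fin d,
      (∏ a ∈ range m, w (tget u a)) * (∏ a ∈ range m, w (tget (u ∘ ⇑α) a)) = 1 := by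
    have c1 : ∀ u : Fin m → Fin d, ∏ a ∈ range m, w (tget u a) = ∏ a : Fin m, w (u a) := by
      intro u
      rw [← Fin.prod_univ_eq_prod_range (fun a => w (tget u a)) m]
      exact Finset.prod_congr rfl fun a _ => by rw [tget_lt u a.val a.isLt, Fin.eta]
    have c2 : ∀ u : Fin m → Fin d,
        ∏ a ∈ range m, w (tget (u ∘ ⇑α) a) = ∏ a : Fin m, w (u a) := by
      intro u
      rw [← Fin.prod_univ_eq_prod_range (fun a => w (tget (u ∘ ⇑α) a)) m]
      have : ∀ a : Fin m, w (tget (u ∘ ⇑α) a.val) = w (u (α a)) := by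
        intro a
        rw [tget_lt (u ∘ ⇑α) a.val a.isLt]
        show w (u (α ⟨a.val, a.isLt⟩)) = w (u (α a))
        rw [Fin.eta]
      rw [Finset.prod_congr rfl fun a _ => this a]
      exact Equiv.prod_comp α (fun a => w (u a))
    have c3 : ∀ u : Fin m → Fin d,
        (∏ a ∈ range m, w (tget u a)) * (∏ a ∈ range m, w (tget (u ∘ ⇑α) a))
          = ∏ a : Fin m, w (u a) ^ 2 := by
      intro u
      rw [c1, c2, ← Finset.prod_mul_distrib]
      exact Finset.prod_congr rfl fun a _ => (sq (w (u a))).symm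
    simp only [c3]
    rw [← Fintype.piFinset_univ, ← Finset.prod_univ_sum (fun _ => univ) (fun _ x => w x ^ 2)]
    simp [hw]
  rw [hwpart, one_mul]

theorem sym_mixed_frobenius {d k j : ℕ} [NeZero d] (hj : 2 * j ≤ k)
    (w : Fin d → ℝ) (hw : ∑ i, w i ^ 2 = 1) :
    ∑ i : Fin k → Fin d,
        (symTensor (mixedTensor w
          (fun a b => (if a = b then (1 : ℝ) else 0) - w a * w b) k j) i) ^ 2 =
      (1 / (k.choose (2 * j) : ℝ)) *
        ∑ i : Fin (2 * j) → Fin d,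
          (symTensor (mixedTensor w
            (fun a b => (if a = b then (1 : ℝ) else 0) - w a * w b) (2 * j) j) i) ^ 2 := by
  have hP : (fun a b => (if a = b then (1 : ℝ) else 0) - w a * w b) = Pw w := rfl
  rw [hP]
  have hm : (k - 2 * j) + 2 * j = k := by omega
  rw [sym_sq (mixedTensor w (Pw w) k j), sym_sq (mixedTensor w (Pw w) (2 * j) j)]
  set F : Equiv.Perm (Fin k) → ℝ := fun τ =>
    ∑ i : Fin k → Fin d, mixedTensor w (Pw w) k j i * mixedTensor w (Pw w) k j (i ∘ ⇑τ) with hF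
  set S : ℝ := ∑ σ : Equiv.Perm (Fin (2 * j)), ∑ v : Fin (2 * j) → Fin d,
      mixedTensor w (Pw w) (2 * j) j v * mixedTensor w (Pw w) (2 * j) j (v ∘ ⇑σ) with hS
  have himg : ∑ p ∈ (univ : Finset (Equiv.Perm (Fin (k - 2 * j)) × Equiv.Perm (Fin (2 * j)))),
      F (embed hm p) = ∑ τ ∈ univ.image (embed hm), F τ :=
    (Finset.sum_image (fun p _ q _ h => embed_injective hm h)).symm
  have hfill : ∑ τ ∈ univ.image (embed hm), F τ = ∑ τ : Equiv.Perm (Fin k), F τ := by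
    apply Finset.sum_subset (subset_univ _)
    intro τ _ hτn
    apply F_vanish hj w hw τ
    intro hpres
    obtain ⟨p, hp⟩ := pres_mem_range hm τ hpres
    exact hτn (mem_image.mpr ⟨p, mem_univ _, hp⟩)
  have hsum : ∑ τ : Equiv.Perm (Fin k), F τ
      = ((k - 2 * j).factorial : ℝ) * S := by
    rw [← hfill, ← himg]
    have : ∀ p : Equiv.Perm (Fin (k - 2 * j)) × Equiv.Perm (Fin (2 * j)),
        F (embed hm p) = ∑ v : Fin (2 * j) → Fin d,
          mixedTensor w (Pw w) (2 * j) j v * mixedTensor w (Pw w) (2 * j) j (v ∘ ⇑p.2) := by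
      intro p
      exact F_embed hj hm w hw p.1 p.2
    rw [Fintype.sum_prod_type]
    simp only [this]
    rw [Finset.sum_const, card_univ, Fintype.card_perm, Fintype.card_fin, nsmul_eq_mul, hS]
  rw [hsum]
  have hC : ((k.choose (2 * j) : ℕ) : ℝ) * ((2 * j).factorial : ℝ) * ((k - 2 * j).factorial : ℝ)
      = (k.factorial : ℝ) := by
    exact_mod_cast congrArg (Nat.cast : ℕ → ℝ)
      (Nat.choose_mul_factorial_mul_factorial hj)
  have h1 : (k.factorial : ℝ) ≠ 0 := by exact_mod_cast (Nat.factorial_pos k).ne'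
  have h2 : (((2 * j).factorial : ℕ) : ℝ) ≠ 0 := by
    exact_mod_cast (Nat.factorial_pos (2 * j)).ne'
  have h3 : ((k.choose (2 * j) : ℕ) : ℝ) ≠ 0 := by
    exact_mod_cast (Nat.choose_pos hj).ne'
  field_simp
  linear_combination S * hC
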